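/- The NLS energy of the truncated rescaled soliton on the unit interval becomes asymptotically nonpositive: limsup_{λ → +∞} λ²·( (1/2)·∫₀^λ φ'(y)² dy − (1/6)·∫₀^λ (φ(y) − φ(λ))⁶ dy ) ≤ 0. -/

import Mathlib

open Real MeasureTheory Set Filter

/-- The soliton `φ(x) = cosh(2x/√3)^(-1/2)`. -/
noncomputable def soliton (x : ℝ) : ℝ := (Real.cosh (2 * x / Real.sqrt 3)) ^ (-(1/2) : ℝ)

private lemma sqrt3_pos : (0:ℝ) < Real.sqrt 3 := Real.sqrt_pos.2 (by norm_num)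

private lemma hasDerivAt_soliton (x : ℝ) :
    HasDerivAt soliton
      (-(1/Real.sqrt 3) * Real.sinh (2 * x / Real.sqrt 3) *
        (Real.cosh (2 * x / Real.sqrt 3)) ^ (-(3/2) : ℝ)) x := by
  have hc : Real.cosh (2 * x / Real.sqrt 3) ≠ 0 := (Real.cosh_pos _).ne'
  have h1 : HasDerivAt (fun x : ℝ => 2 * x / Real.sqrt 3) (2 / Real.sqrt 3) x := by
    simpa using ((hasDerivAt_id x).const_mul 2).div_const (Real.sqrt 3)
  have h2 : HasDerivAt (fun x : ℝ => Real.cosh (2 * x / Real.sqrt 3))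
      (Real.sinh (2 * x / Real.sqrt 3) * (2 / Real.sqrt 3)) x :=
    (Real.hasDerivAt_cosh _).comp x h1
  have h3 := h2.rpow_const (p := (-(1/2) : ℝ)) (Or.inl hc)
  have he : (-(1/2) : ℝ) - 1 = -(3/2) := by norm_num
  rw [he] at h3
  convert h3 using 1
  · rfl
  · ring

private lemma rpow_sq_helper {c : ℝ} (hc : 0 < c) (p : ℝ) :
    (c ^ p) ^ 2 = c ^ (2 * p) := by
  rw [← Real.rpow_natCast (c ^ p) 2, ← Real.rpow_mul hc.le]
  norm_num [mul_comm]

private lemma soliton_sq (x : ℝ) :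
    soliton x ^ 2 = (Real.cosh (2 * x / Real.sqrt 3))⁻¹ := by
  have hc := Real.cosh_pos (2 * x / Real.sqrt 3)
  rw [soliton, rpow_sq_helper hc]
  norm_num [Real.rpow_neg_one]

private lemma soliton_six (x : ℝ) :
    soliton x ^ 6 = ((Real.cosh (2 * x / Real.sqrt 3)) ^ 3)⁻¹ := by
  have hc := Real.cosh_pos (2 * x / Real.sqrt 3)
  have : soliton x ^ 6 = ((soliton x ^ 2) ^ 3) := by ring
  rw [this, soliton_sq, inv_pow]

private lemma deriv_soliton_sq (x : ℝ) :
    (deriv soliton x) ^ 2 = (1/3) * (soliton x ^ 2 - soliton x ^ 6) := by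
  have hc := Real.cosh_pos (2 * x / Real.sqrt 3)
  rw [(hasDerivAt_soliton x).deriv]
  have h1 : ((Real.cosh (2 * x / Real.sqrt 3)) ^ (-(3/2) : ℝ)) ^ 2
      = ((Real.cosh (2 * x / Real.sqrt 3)) ^ 3)⁻¹ := by
    rw [rpow_sq_helper hc]
    rw [show ((2:ℝ) * -(3/2)) = -((3:ℕ):ℝ) by norm_num, Real.rpow_neg hc.le, Real.rpow_natCast]
  have hs : Real.sinh (2 * x / Real.sqrt 3) ^ 2 = Real.cosh (2 * x / Real.sqrt 3) ^ 2 - 1 := by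
    have := Real.cosh_sq (2 * x / Real.sqrt 3)
    linarith
  have h3 : (Real.sqrt 3) ^ 2 = 3 := Real.sq_sqrt (by norm_num)
  rw [mul_pow, mul_pow, h1, soliton_sq, soliton_six]
  rw [hs]
  field_simp
  rw [h3]; ring

private lemma soliton_nonneg (x : ℝ) : 0 ≤ soliton x :=
  Real.rpow_nonneg (Real.cosh_pos _).le _

private lemma soliton_le_one (x : ℝ) : soliton x ≤ 1 :=
  Real.rpow_le_one_of_one_le_of_nonpos (Real.one_le_cosh _) (by norm_num)

private lemma soliton_anti {y l : ℝ} (hy : 0 ≤ y) (hyl : y ≤ l) :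
    soliton l ≤ soliton y := by
  have hc := Real.cosh_pos (2 * y / Real.sqrt 3)
  apply Real.rpow_le_rpow_of_nonpos hc _ (by norm_num)
  rw [Real.cosh_le_cosh]
  have h3 := sqrt3_pos
  rw [abs_of_nonneg (div_nonneg (by linarith) h3.le), abs_of_nonneg (div_nonneg (by linarith) h3.le)]
  gcongr

private lemma pow_six_bound {a b : ℝ} (hb : 0 ≤ b) (hba : b ≤ a) (ha : a ≤ 1) :
    a ^ 6 - (a - b) ^ 6 ≤ 6 * b := by
  have h0 : 0 ≤ a - b := by linarith
  have key : a ^ 6 - (a - b) ^ 6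
      = b * (a^5 + a^4*(a-b) + a^3*(a-b)^2 + a^2*(a-b)^3 + a*(a-b)^4 + (a-b)^5) := by ring
  have hab : a - b ≤ 1 := by linarith
  have h1 : a^5 ≤ 1 := pow_le_one₀ (by linarith) ha
  have h2 : (a-b)^5 ≤ 1 := pow_le_one₀ h0 hab
  have ha0 : 0 ≤ a := by linarith
  have e1 : a^4*(a-b) ≤ 1 := by
    calc a^4*(a-b) ≤ 1*1 := by
          apply mul_le_mul (pow_le_one₀ ha0 ha) hab h0 (by norm_num)
      _ = 1 := by norm_num
  have e2 : a^3*(a-b)^2 ≤ 1 := by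
    calc a^3*(a-b)^2 ≤ 1*1 := by
          apply mul_le_mul (pow_le_one₀ ha0 ha) (pow_le_one₀ h0 hab) (by positivity) (by norm_num)
      _ = 1 := by norm_num
  have e3 : a^2*(a-b)^3 ≤ 1 := by
    calc a^2*(a-b)^3 ≤ 1*1 := by
          apply mul_le_mul (pow_le_one₀ ha0 ha) (pow_le_one₀ h0 hab) (by positivity) (by norm_num)
      _ = 1 := by norm_num
  have e4 : a*(a-b)^4 ≤ 1 := by
    calc a*(a-b)^4 ≤ 1*1 := by
          apply mul_le_mul ha (pow_le_one₀ h0 hab) (by positivity) (by norm_num)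
      _ = 1 := by norm_num
  calc a ^ 6 - (a - b) ^ 6 ≤ b * 6 := by
        rw [key]; apply mul_le_mul_of_nonneg_left (by linarith) hb
    _ = 6 * b := by ring

noncomputable def solF (x : ℝ) : ℝ :=
  -(Real.sqrt 3 / 2) * (Real.sinh (2 * x / Real.sqrt 3) / (Real.cosh (2 * x / Real.sqrt 3)) ^ 2)

private lemma hasDerivAt_solF (x : ℝ) :
    HasDerivAt solF (soliton x ^ 2 - 2 * soliton x ^ 6) x := by
  have hc := Real.cosh_pos (2 * x / Real.sqrt 3)
  have h3 := sqrt3_pos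
  have h1 : HasDerivAt (fun x : ℝ => 2 * x / Real.sqrt 3) (2 / Real.sqrt 3) x := by
    simpa using ((hasDerivAt_id x).const_mul 2).div_const (Real.sqrt 3)
  have hs : HasDerivAt (fun x : ℝ => Real.sinh (2 * x / Real.sqrt 3))
      (Real.cosh (2 * x / Real.sqrt 3) * (2 / Real.sqrt 3)) x :=
    (Real.hasDerivAt_sinh _).comp x h1
  have hcc : HasDerivAt (fun x : ℝ => (Real.cosh (2 * x / Real.sqrt 3)) ^ 2)
      (2 * Real.cosh (2 * x / Real.sqrt 3) * (Real.sinh (2 * x / Real.sqrt 3) * (2 / Real.sqrt 3))) x := by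
    have h2 : HasDerivAt (fun x : ℝ => Real.cosh (2 * x / Real.sqrt 3))
        (Real.sinh (2 * x / Real.sqrt 3) * (2 / Real.sqrt 3)) x :=
      (Real.hasDerivAt_cosh _).comp x h1
    simpa [mul_comm, mul_assoc] using (h2.fun_pow 2)
  have hdiv := (hs.div hcc (by positivity))
  have := hdiv.const_mul (-(Real.sqrt 3 / 2))
  convert this using 1
  · rfl
  · rfl
  · rfl
  rw [soliton_sq, soliton_six]
  have hsq : Real.sinh (2 * x / Real.sqrt 3) ^ 2 = Real.cosh (2 * x / Real.sqrt 3) ^ 2 - 1 := by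
    have := Real.cosh_sq (2 * x / Real.sqrt 3)
    linarith
  have h3' : (Real.sqrt 3) ^ 2 = 3 := Real.sq_sqrt (by norm_num)
  field_simp
  linear_combination (-2) * hsq

private lemma continuous_soliton : Continuous soliton := by
  apply Continuous.rpow_const
  · exact Real.continuous_cosh.comp (by continuity)
  · exact fun x => Or.inl (Real.cosh_pos _).ne'

private lemma continuous_deriv_soliton : Continuous (deriv soliton) := by
  have : deriv soliton = fun x => -(1/Real.sqrt 3) * Real.sinh (2 * x / Real.sqrt 3) *
      (Real.cosh (2 * x / Real.sqrt 3)) ^ (-(3/2) : ℝ) := by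
    funext x; exact (hasDerivAt_soliton x).deriv
  rw [this]
  apply Continuous.mul
  · exact continuous_const.mul (Real.continuous_sinh.comp (by continuity))
  · apply Continuous.rpow_const
    · exact Real.continuous_cosh.comp (by continuity)
    · exact fun x => Or.inl (Real.cosh_pos _).ne'

private lemma integral_F {l : ℝ} (hl : 0 ≤ l) :
    ∫ y in Ioo (0:ℝ) l, (soliton y ^ 2 - 2 * soliton y ^ 6) = solF l - solF 0 := by
  rw [← MeasureTheory.integral_Ioc_eq_integral_Ioo, ← intervalIntegral.integral_of_le hl]
  apply intervalIntegral.integral_eq_sub_of_hasDerivAt (fun x _ => hasDerivAt_solF x)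
  apply Continuous.intervalIntegrable
  have := continuous_soliton
  continuity

private lemma solF_zero : solF 0 = 0 := by simp [solF]

private lemma solF_nonpos {l : ℝ} (hl : 0 ≤ l) : solF l ≤ 0 := by
  have h3 := sqrt3_pos
  have hs : 0 ≤ Real.sinh (2 * l / Real.sqrt 3) := by
    rw [← Real.sinh_zero]
    apply Real.sinh_le_sinh.2
    positivity
  have hc := Real.cosh_pos (2 * l / Real.sqrt 3)
  rw [solF]
  have : 0 ≤ Real.sinh (2 * l / Real.sqrt 3) / Real.cosh (2 * l / Real.sqrt 3) ^ 2 := by positivity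
  nlinarith

private lemma main_bound {l : ℝ} (hl : 0 ≤ l) :
    (1/2) * (∫ y in Ioo (0:ℝ) l, (deriv soliton y) ^ 2)
      - (1/6) * (∫ y in Ioo (0:ℝ) l, (soliton y - soliton l) ^ 6) ≤ l * soliton l := by
  have hA : IntegrableOn (fun y => (deriv soliton y) ^ 2) (Ioo (0:ℝ) l) :=
    ((continuous_deriv_soliton.pow 2).integrableOn_Icc).mono_set Ioo_subset_Icc_self
  have hB : IntegrableOn (fun y => (soliton y - soliton l) ^ 6) (Ioo (0:ℝ) l) :=
    (((continuous_soliton.sub continuous_const).pow 6).integrableOn_Icc).mono_set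
      Ioo_subset_Icc_self
  have hG : IntegrableOn
      (fun y => (1/6) * (soliton y ^ 2 - 2 * soliton y ^ 6) + soliton l) (Ioo (0:ℝ) l) := by
    apply Continuous.integrableOn_Icc (by
      have := continuous_soliton; continuity) |>.mono_set Ioo_subset_Icc_self
  have hG' : IntegrableOn
      (fun y => soliton y ^ 2 - 2 * soliton y ^ 6) (Ioo (0:ℝ) l) := by
    apply Continuous.integrableOn_Icc (by
      have := continuous_soliton; continuity) |>.mono_set Ioo_subset_Icc_self
  have step1 : (1/2) * (∫ y in Ioo (0:ℝ) l, (deriv soliton y) ^ 2)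
      - (1/6) * (∫ y in Ioo (0:ℝ) l, (soliton y - soliton l) ^ 6)
      = ∫ y in Ioo (0:ℝ) l,
          ((1/2) * (deriv soliton y) ^ 2 - (1/6) * (soliton y - soliton l) ^ 6) := by
    rw [MeasureTheory.integral_sub (hA.const_mul _) (hB.const_mul _),
      MeasureTheory.integral_const_mul, MeasureTheory.integral_const_mul]
  have step2 : ∫ y in Ioo (0:ℝ) l,
      ((1/2) * (deriv soliton y) ^ 2 - (1/6) * (soliton y - soliton l) ^ 6)
      ≤ ∫ y in Ioo (0:ℝ) l,
          ((1/6) * (soliton y ^ 2 - 2 * soliton y ^ 6) + soliton l) := by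
    apply MeasureTheory.setIntegral_mono_on
      ((hA.const_mul _).sub (hB.const_mul _)) hG measurableSet_Ioo
    intro y hy
    have hkey := pow_six_bound (soliton_nonneg l)
      (soliton_anti hy.1.le hy.2.le) (soliton_le_one y)
    have hder := deriv_soliton_sq y
    simp only [Pi.sub_apply]
    nlinarith
  have step3 : ∫ y in Ioo (0:ℝ) l,
      ((1/6) * (soliton y ^ 2 - 2 * soliton y ^ 6) + soliton l)
      = (1/6) * (solF l - solF 0) + l * soliton l := by
    rw [MeasureTheory.integral_add (hG'.const_mul _) (integrableOn_const (by
        rw [Real.volume_Ioo]; exact ENNReal.ofReal_ne_top))]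
    have e1 : (∫ a in Ioo (0:ℝ) l, (1:ℝ)/6 * (soliton a ^ 2 - 2 * soliton a ^ 6))
        = (1/6) * (solF l - solF 0) := by
      rw [MeasureTheory.integral_const_mul, integral_F hl]
    have e2 : (∫ _a in Ioo (0:ℝ) l, soliton l) = l * soliton l := by
      rw [MeasureTheory.setIntegral_const, measureReal_def, Real.volume_Ioo, smul_eq_mul,
        ENNReal.toReal_ofReal (by linarith)]
      ring
    rw [e1, e2]
  have := solF_nonpos hl
  rw [solF_zero] at step3
  linarith [step1, step2, step3]

private lemma soliton_decay {l : ℝ} (hl : 0 ≤ l) :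
    soliton l ≤ Real.sqrt 2 * Real.exp (-(l / Real.sqrt 3)) := by
  have h3 := sqrt3_pos
  set t := 2 * l / Real.sqrt 3 with ht
  have ht0 : 0 ≤ t := by positivity
  have hc : Real.exp t / 2 ≤ Real.cosh t := by
    rw [Real.cosh_eq]
    have := Real.exp_pos (-t)
    linarith
  have hx2 : soliton l ^ 2 ≤ 2 * Real.exp (-t) := by
    rw [soliton_sq]
    rw [← ht]
    have he := Real.exp_pos t
    have h1 : (Real.cosh t)⁻¹ ≤ (Real.exp t / 2)⁻¹ := by
      apply inv_anti₀ (by linarith) hc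
    calc (Real.cosh t)⁻¹ ≤ (Real.exp t / 2)⁻¹ := h1
      _ = 2 * Real.exp (-t) := by rw [Real.exp_neg]; field_simp
  have hy : (Real.sqrt 2 * Real.exp (-(l / Real.sqrt 3))) ^ 2 = 2 * Real.exp (-t) := by
    rw [mul_pow, Real.sq_sqrt (by norm_num : (0:ℝ) ≤ 2), sq, ← Real.exp_add, ht]
    congr 1
    ring
  have hxn := soliton_nonneg l
  have hyn : 0 ≤ Real.sqrt 2 * Real.exp (-(l / Real.sqrt 3)) := by positivity
  nlinarith [hx2, hy]

private lemma exp_lower {l : ℝ} (hl : 0 ≤ l) :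
    l ^ 4 / 2304 ≤ Real.exp (l / Real.sqrt 3) := by
  have h3 := sqrt3_pos
  have hq : 0 ≤ l / (4 * Real.sqrt 3) := by positivity
  have h1 : 1 + l / (4 * Real.sqrt 3) ≤ Real.exp (l / (4 * Real.sqrt 3)) := by
    have := Real.add_one_le_exp (l / (4 * Real.sqrt 3)); linarith
  have h2 : (l / (4 * Real.sqrt 3)) ^ 4 ≤ (Real.exp (l / (4 * Real.sqrt 3))) ^ 4 := by
    apply pow_le_pow_left₀ hq (by linarith)
  have h4 : (Real.exp (l / (4 * Real.sqrt 3))) ^ 4 = Real.exp (l / Real.sqrt 3) := by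
    rw [← Real.exp_nat_mul]
    congr 1
    push_cast
    field_simp
  have h5 : (l / (4 * Real.sqrt 3)) ^ 4 = l ^ 4 / 2304 := by
    rw [div_pow]
    congr 1
    have hs : Real.sqrt 3 ^ 2 = 3 := Real.sq_sqrt (by norm_num)
    nlinarith [hs]
  rw [← h4, ← h5]
  exact h2

private lemma key_bound {l : ℝ} (hl1 : 1 ≤ l) :
    l ^ 2 *
        ((1/2) * (∫ y in Set.Ioo (0:ℝ) l, (deriv soliton y) ^ 2)
          - (1/6) * ∫ y in Set.Ioo (0:ℝ) l, (soliton y - soliton l) ^ 6) ≤ 4608 / l := by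
  have hl0 : (0:ℝ) ≤ l := by linarith
  have hlne : l ≠ 0 := by linarith
  have hs : soliton l ≤ 4608 / l ^ 4 := by
    have d1 := soliton_decay hl0
    have d2 := exp_lower hl0
    have he : Real.exp (-(l / Real.sqrt 3)) = (Real.exp (l / Real.sqrt 3))⁻¹ :=
      Real.exp_neg _
    have hl4 : (0:ℝ) < l ^ 4 / 2304 := by positivity
    have hinv : (Real.exp (l / Real.sqrt 3))⁻¹ ≤ (l ^ 4 / 2304)⁻¹ := inv_anti₀ hl4 d2
    have hsqrt2 : Real.sqrt 2 ≤ 2 := by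
      nlinarith [Real.sq_sqrt (show (0:ℝ) ≤ 2 by norm_num), Real.sqrt_nonneg 2]
    calc soliton l ≤ Real.sqrt 2 * Real.exp (-(l / Real.sqrt 3)) := d1
      _ ≤ 2 * (l ^ 4 / 2304)⁻¹ := by
          apply mul_le_mul hsqrt2 (he ▸ hinv) (Real.exp_pos _).le (by norm_num)
      _ = 4608 / l ^ 4 := by field_simp; norm_num
  have h1 := main_bound hl0
  calc l ^ 2 *
        ((1/2) * (∫ y in Set.Ioo (0:ℝ) l, (deriv soliton y) ^ 2)
          - (1/6) * ∫ y in Set.Ioo (0:ℝ) l, (soliton y - soliton l) ^ 6)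
      ≤ l ^ 2 * (l * soliton l) := by
        apply mul_le_mul_of_nonneg_left h1 (by positivity)
    _ ≤ l ^ 2 * (l * (4608 / l ^ 4)) := by
        apply mul_le_mul_of_nonneg_left
          (mul_le_mul_of_nonneg_left hs (by linarith)) (by positivity)
    _ = 4608 / l := by field_simp

theorem stmt_15 :
    Filter.limsup
      (fun l : ℝ => l ^ 2 *
        ((1/2) * (∫ y in Set.Ioo (0:ℝ) l, (deriv soliton y) ^ 2)
          - (1/6) * ∫ y in Set.Ioo (0:ℝ) l, (soliton y - soliton l) ^ 6))
      Filter.atTop ≤ 0 := by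
  rw [Filter.limsup_eq]
  set f := fun l : ℝ => l ^ 2 *
        ((1/2) * (∫ y in Set.Ioo (0:ℝ) l, (deriv soliton y) ^ 2)
          - (1/6) * ∫ y in Set.Ioo (0:ℝ) l, (soliton y - soliton l) ^ 6) with hf
  set s := {a : ℝ | ∀ᶠ l in atTop, f l ≤ a} with hsdef
  have hmem : ∀ ε : ℝ, 0 < ε → ε ∈ s := by
    intro ε hε
    have : ∀ᶠ l : ℝ in atTop, max 1 (4608 / ε) ≤ l := eventually_ge_atTop _
    filter_upwards [this] with l hl
    have hl1 : (1:ℝ) ≤ l := le_trans (le_max_left _ _) hl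
    have hl2 : 4608 / ε ≤ l := le_trans (le_max_right _ _) hl
    have hk := key_bound hl1
    have hle : 4608 / l ≤ ε := by
      rw [div_le_iff₀ (by linarith : (0:ℝ) < l)]
      have := (div_le_iff₀ hε).1 hl2
      linarith
    exact le_trans hk hle
  by_cases hbdd : BddBelow s
  · have h1 : ∀ ε : ℝ, 0 < ε → sInf s ≤ ε := fun ε hε => csInf_le hbdd (hmem ε hε)
    by_contra hcon
    push_neg at hcon
    have := h1 (sInf s / 2) (by linarith)
    linarith
  · rw [Real.sInf_of_not_bddBelow hbdd]
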